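/- The infinite series Σ_{k=0}^{∞} 2/(1 + (2k+1)²) converges to (π/2)·tanh(π/2). -/

import Mathlib

open Real

noncomputable section StmtAux

namespace StmtAux

local instance : Fact (0 < 2 * π) := ⟨by positivity⟩

/-- The key integral. -/
lemma key_integral (n : ℤ) :
    (∫ x in (-π)..π, Complex.exp (-(n : ℂ) * Complex.I * x) * Complex.cosh x)
      = (-1 : ℂ) ^ n * (2 * Real.sinh π) / (1 + (n : ℂ) ^ 2) := by
  have h1 : ((1 : ℂ) - n * Complex.I) ≠ 0 := by
    intro h
    have := congrArg Complex.re h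
    simp at this
  have h2 : ((-1 : ℂ) - n * Complex.I) ≠ 0 := by
    intro h
    have := congrArg Complex.re h
    simp at this
  have hcongr : ∀ x : ℝ, Complex.exp (-(n : ℂ) * Complex.I * x) * Complex.cosh x
      = (Complex.exp (((1 : ℂ) - n * Complex.I) * x)
        + Complex.exp (((-1 : ℂ) - n * Complex.I) * x)) / 2 := by
    intro x
    rw [show Complex.cosh (x:ℂ) = (Complex.exp x + Complex.exp (-x))/2 from rfl, mul_div_assoc', mul_add, ← Complex.exp_add, ← Complex.exp_add]
    ring_nf
  rw [intervalIntegral.integral_congr (fun x _ => hcongr x)]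
  have int1 : IntervalIntegrable (fun x : ℝ => Complex.exp (((1 : ℂ) - n * Complex.I) * x))
      MeasureTheory.volume (-π) π := (Continuous.intervalIntegrable (by continuity) _ _)
  have int2 : IntervalIntegrable (fun x : ℝ => Complex.exp (((-1 : ℂ) - n * Complex.I) * x))
      MeasureTheory.volume (-π) π := (Continuous.intervalIntegrable (by continuity) _ _)
  rw [intervalIntegral.integral_div, intervalIntegral.integral_add int1 int2,
    integral_exp_mul_complex h1, integral_exp_mul_complex h2]
  have hmn : Complex.exp (-(n : ℂ) * (↑π * Complex.I)) = (-1 : ℂ) ^ n := by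
    rw [show (-(n : ℂ) * (↑π * Complex.I)) = (-n : ℤ) * (↑π * Complex.I) by push_cast; ring,
      Complex.exp_int_mul, Complex.exp_pi_mul_I, zpow_neg, ← inv_zpow, inv_neg, inv_one]
  have hpn : Complex.exp ((n : ℂ) * (↑π * Complex.I)) = (-1 : ℂ) ^ n := by
    rw [show ((n : ℂ) * (↑π * Complex.I)) = (n : ℤ) * (↑π * Complex.I) by push_cast; ring,
      Complex.exp_int_mul, Complex.exp_pi_mul_I]
  have e1 : Complex.exp (((1 : ℂ) - n * Complex.I) * π)
      = Real.exp π * (-1 : ℂ) ^ n := by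
    rw [show (((1 : ℂ) - n * Complex.I) * π) = ↑π + (-(n:ℂ) * (↑π * Complex.I)) by ring,
      Complex.exp_add, hmn, Complex.ofReal_exp]
  have e2 : Complex.exp (((1 : ℂ) - n * Complex.I) * (-π : ℝ))
      = Real.exp (-π) * (-1 : ℂ) ^ n := by
    rw [show (((1 : ℂ) - n * Complex.I) * ((-π : ℝ) : ℂ)) = ↑(-π : ℝ) + ((n:ℂ) * (↑π * Complex.I)) by
        push_cast; ring, Complex.exp_add, hpn, Complex.ofReal_exp]
  have e3 : Complex.exp (((-1 : ℂ) - n * Complex.I) * π)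
      = Real.exp (-π) * (-1 : ℂ) ^ n := by
    rw [show (((-1 : ℂ) - n * Complex.I) * ↑π) = ↑(-π : ℝ) + (-(n:ℂ) * (↑π * Complex.I)) by
        push_cast; ring, Complex.exp_add, hmn, Complex.ofReal_exp]
  have e4 : Complex.exp (((-1 : ℂ) - n * Complex.I) * (-π : ℝ))
      = Real.exp π * (-1 : ℂ) ^ n := by
    rw [show (((-1 : ℂ) - n * Complex.I) * ((-π : ℝ) : ℂ)) = ↑π + ((n:ℂ) * (↑π * Complex.I)) by
        push_cast; ring, Complex.exp_add, hpn, Complex.ofReal_exp]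
  have h3 : ((1:ℂ) + (n:ℂ)^2) ≠ 0 := by
    have : ((1:ℂ) + (n:ℂ)^2) = ((1 + (n:ℝ)^2 : ℝ) : ℂ) := by push_cast; ring
    rw [this, Complex.ofReal_ne_zero]
    positivity
  rw [e1, e2, e3, e4, Real.sinh_eq]
  field_simp
  ring_nf
  rw [Complex.I_sq]
  push_cast; ring


def F : ℝ → ℂ := fun x => Complex.cosh x

def G : AddCircle (2 * π) → ℂ := AddCircle.liftIco (2 * π) (-π) F

lemma contG : Continuous G := by
  apply AddCircle.liftIco_continuous
  · show Complex.cosh _ = Complex.cosh _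
    rw [show -π + 2 * π = π by ring, show ((-π : ℝ) : ℂ) = -(π : ℂ) by push_cast; ring,
      Complex.cosh_neg]
  · exact Continuous.continuousOn (Complex.continuous_cosh.comp Complex.continuous_ofReal)

lemma coeffG (n : ℤ) :
    fourierCoeff G n = ((-1 : ℂ) ^ n * Real.sinh π / (π * (1 + (n : ℂ) ^ 2))) := by
  rw [G, fourierCoeff_liftIco_eq]
  rw [fourierCoeffOn_eq_integral]
  have hb : -π + 2 * π = π := by ring
  rw [hb]
  have hx : ∀ x : ℝ, (fourier (-n) (x : AddCircle (π - -π)) : ℂ) • F x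
      = Complex.exp (-(n : ℂ) * Complex.I * x) * Complex.cosh x := by
    intro x
    rw [smul_eq_mul, fourier_coe_apply]
    congr 2
    have hπ : (π : ℂ) ≠ 0 := by
      simpa using Real.pi_ne_zero
    push_cast
    rw [show ((π:ℂ) - -↑π) = 2 * ↑π by ring, div_eq_iff (mul_ne_zero two_ne_zero hπ)]
    ring
  rw [intervalIntegral.integral_congr (fun x _ => hx x), key_integral n]
  have h2π : π - -π = 2 * π := by ring
  rw [h2π]
  have hπ : (π : ℂ) ≠ 0 := by simpa using Real.pi_ne_zero
  have h3 : ((1:ℂ) + (n:ℂ)^2) ≠ 0 := by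
    have : ((1:ℂ) + (n:ℂ)^2) = ((1 + (n:ℝ)^2 : ℝ) : ℂ) := by push_cast; ring
    rw [this, Complex.ofReal_ne_zero]
    positivity
  rw [Complex.real_smul]
  push_cast
  field_simp


lemma exp_int_pi (n : ℤ) : Complex.exp ((n : ℂ) * (↑π * Complex.I)) = (-1 : ℂ) ^ n := by
  rw [show ((n : ℂ) * (↑π * Complex.I)) = (n : ℤ) * (↑π * Complex.I) by push_cast; ring,
    Complex.exp_int_mul, Complex.exp_pi_mul_I]

lemma summable_aux : Summable (fun n : ℤ => (1 + (n : ℝ) ^ 2)⁻¹) := by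
  have h0 : Summable (fun n : ℕ => 1 / (n : ℝ) ^ 2) := summable_one_div_nat_pow.2 one_lt_two
  have hb : Summable (fun n : ℕ => 2 * (1 / ((n : ℝ) + 1) ^ 2)) := by
    apply Summable.mul_left
    have := (summable_nat_add_iff 1).2 h0
    simpa using this
  have hnat : Summable (fun n : ℕ => (1 + (n : ℝ) ^ 2)⁻¹) := by
    refine Summable.of_nonneg_of_le (fun n => by positivity) (fun n => ?_) hb
    rw [inv_eq_one_div, mul_one_div, div_le_div_iff₀ (by positivity) (by positivity)]
    nlinarith [sq_nonneg ((n : ℝ) - 1)]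
  refine Summable.of_nat_of_neg ?_ ?_ <;> simpa using hnat

/-- The real value of the `n`-th Fourier coefficient. -/
def c (n : ℤ) : ℝ := (-1 : ℝ) ^ n * Real.sinh π / (π * (1 + (n : ℝ) ^ 2))

lemma coeffG' (n : ℤ) : fourierCoeff G n = Complex.ofReal (c n) := by
  rw [coeffG, c]
  push_cast
  ring

lemma summable_coeffG : Summable (fourierCoeff G) := by
  refine Summable.of_norm_bounded
    (g := fun n : ℤ => Real.sinh π / π * (1 + (n : ℝ) ^ 2)⁻¹) (summable_aux.mul_left _)
    (fun n => le_of_eq ?_)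
  rw [coeffG', Complex.norm_real]
  have hc : c n = (-1 : ℝ) ^ n * (Real.sinh π / π * (1 + (n : ℝ) ^ 2)⁻¹) := by
    rw [c]; field_simp
  have habs : |(-1 : ℝ) ^ n| = 1 := by
    rcases Int.even_or_odd n with hp | hp
    · rw [hp.neg_one_zpow, abs_one]
    · rw [hp.neg_one_zpow, abs_neg, abs_one]
  rw [hc, Real.norm_eq_abs, abs_mul, habs, one_mul,
    abs_of_nonneg (mul_nonneg (div_nonneg (Real.sinh_pos_iff.2 Real.pi_pos).le Real.pi_pos.le)
      (by positivity))]

def FC : C(AddCircle (2 * π), ℂ) := ⟨G, contG⟩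

lemma hasSumA : HasSum (fun n : ℤ => c n) 1 := by
  have h := has_pointwise_sum_fourier_series_of_summable
    (f := FC) summable_coeffG (((0 : ℝ) : AddCircle (2 * π)))
  have hG0 : G (((0 : ℝ) : AddCircle (2 * π))) = 1 := by
    rw [G, AddCircle.liftIco_coe_apply ⟨by linarith [Real.pi_pos], by linarith [Real.pi_pos]⟩]
    simp [F]
  have hfour : ∀ i : ℤ, (fourier i (((0 : ℝ) : AddCircle (2 * π))) : ℂ) = 1 := by
    intro i
    rw [fourier_coe_apply]
    simp
  have hFCG : ⇑FC = G := rfl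
  rw [hFCG] at h
  simp only [hfour, smul_eq_mul, mul_one, coeffG'] at h
  rw [hG0] at h
  have h2 := h.mapL Complex.reCLM
  simpa using h2

lemma hasSumB : HasSum (fun n : ℤ => Real.sinh π / (π * (1 + (n : ℝ) ^ 2))) (Real.cosh π) := by
  have h := has_pointwise_sum_fourier_series_of_summable
    (f := FC) summable_coeffG ((((-π) : ℝ) : AddCircle (2 * π)))
  have hπ : (π : ℂ) ≠ 0 := by simpa using Real.pi_ne_zero
  have hGπ : G ((((-π) : ℝ) : AddCircle (2 * π))) = Complex.ofReal (Real.cosh π) := by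
    rw [G, AddCircle.liftIco_coe_apply ⟨le_refl _, by linarith [Real.pi_pos]⟩]
    rw [F, Complex.ofReal_cosh]
    push_cast
    rw [Complex.cosh_neg]
  have hfour : ∀ i : ℤ, (fourier i ((((-π) : ℝ) : AddCircle (2 * π))) : ℂ)
      = (-1 : ℂ) ^ i := by
    intro i
    rw [fourier_coe_apply]
    rw [show 2 * (π:ℂ) * Complex.I * i * ((-π : ℝ) : ℂ) / ((2 * π : ℝ) : ℂ)
        = (-i : ℤ) * ((π:ℂ) * Complex.I) by push_cast; field_simp]
    rw [exp_int_pi, zpow_neg, ← inv_zpow, inv_neg, inv_one]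
  have hFCG : ⇑FC = G := rfl
  rw [hFCG] at h
  simp only [hfour, smul_eq_mul, coeffG'] at h
  rw [hGπ] at h
  have h2 := h.mapL Complex.reCLM
  simp only [Complex.reCLM_apply] at h2
  have he : ∀ i : ℤ, (Complex.ofReal (c i) * (-1 : ℂ) ^ i).re
      = Real.sinh π / (π * (1 + (i : ℝ) ^ 2)) := by
    intro i
    rw [show ((-1 : ℂ) ^ i) = Complex.ofReal ((-1 : ℝ) ^ i) by push_cast; ring,
      ← Complex.ofReal_mul, Complex.ofReal_re, c]
    rw [div_mul_eq_mul_div, mul_comm, ← mul_assoc, ← zpow_add₀ (by norm_num : (-1:ℝ) ≠ 0),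
      ← two_mul, zpow_mul]
    norm_num
  simpa only [he, Complex.ofReal_re] using h2

lemma hNat : HasSum
    (fun n : ℕ => (1 - (-1 : ℝ) ^ n) * (2 * Real.sinh π) / (π * (1 + (n : ℝ) ^ 2)))
    (Real.cosh π - 1) := by
  have hD := hasSumB.sub hasSumA
  have hN := hD.nat_add_neg
  convert hN using 1
  · rfl
  · funext n
    have e1 : (-1 : ℝ) ^ ((n : ℤ)) = (-1 : ℝ) ^ n := zpow_natCast _ _
    have e2 : (-1 : ℝ) ^ (-(n : ℤ)) = (-1 : ℝ) ^ n := by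
      rw [zpow_neg, e1, ← inv_pow, inv_neg, inv_one]
    simp only [c]
    rw [e1, e2]
    push_cast
    have hd : π * (1 + (n : ℝ) ^ 2) ≠ 0 := by positivity
    field_simp
    ring
  · simp only [c]
    norm_num

end StmtAux

end StmtAux

theorem stmt_7 :
    HasSum (fun k : ℕ => 2 / (1 + (2 * (k : ℝ) + 1) ^ 2))
      (π / 2 * Real.tanh (π / 2)) := by
  have hN := StmtAux.hNat
  have hinj : Function.Injective (fun k : ℕ => 2 * k + 1) := by
    intro a b h
    simpa using h
  have hvanish : ∀ n ∉ Set.range (fun k : ℕ => 2 * k + 1),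
      (1 - (-1 : ℝ) ^ n) * (2 * Real.sinh π) / (π * (1 + (n : ℝ) ^ 2)) = 0 := by
    intro n hn
    have heven : Even n := by
      rcases Nat.even_or_odd n with h | h
      · exact h
      · exact absurd ⟨h.choose, h.choose_spec.symm⟩ hn
    rw [heven.neg_one_pow]
    simp
  have hodd := (hinj.hasSum_iff hvanish).2 hN
  have hfin := hodd.mul_left (π / (2 * Real.sinh π))
  have hs : (0 : ℝ) < Real.sinh π := Real.sinh_pos_iff.2 Real.pi_pos
  have hs2 : (0 : ℝ) < Real.sinh (π / 2) := Real.sinh_pos_iff.2 (by positivity)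
  have hc2 : (0 : ℝ) < Real.cosh (π / 2) := Real.cosh_pos _
  have hterm : ∀ k : ℕ, (π / (2 * Real.sinh π)) *
      ((1 - (-1 : ℝ) ^ (2 * k + 1)) * (2 * Real.sinh π) / (π * (1 + ((2 * k + 1 : ℕ) : ℝ) ^ 2)))
      = 2 / (1 + (2 * (k : ℝ) + 1) ^ 2) := by
    intro k
    rw [Odd.neg_one_pow ⟨k, by ring⟩]
    push_cast
    have h1 : (0 : ℝ) < 1 + (2 * (k : ℝ) + 1) ^ 2 := by positivity
    field_simp
    ring
  have hval : (π / (2 * Real.sinh π)) * (Real.cosh π - 1) = π / 2 * Real.tanh (π / 2) := by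
    have hcosh : Real.cosh π = Real.cosh (π / 2) ^ 2 + Real.sinh (π / 2) ^ 2 := by
      have := Real.cosh_two_mul (π / 2)
      rwa [show 2 * (π / 2) = π by ring] at this
    have hsinh : Real.sinh π = 2 * Real.sinh (π / 2) * Real.cosh (π / 2) := by
      have := Real.sinh_two_mul (π / 2)
      rwa [show 2 * (π / 2) = π by ring] at this
    have hsq : Real.cosh (π / 2) ^ 2 = Real.sinh (π / 2) ^ 2 + 1 := Real.cosh_sq _
    rw [hcosh, hsinh, hsq, Real.tanh_eq_sinh_div_cosh]
    field_simp
    ring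
  rw [hval] at hfin
  convert hfin using 2 with k
  · rfl
  exact (hterm k).symm
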